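/- Any 2-plane straight-line drawing Γ admits, for every ε > 0, a partial edge drawing in which every segment s is drawn with total stub length at least |s| − ε; hence the supremum of ink over all PEDs of a 2-plane drawing equals the total length of all segments. -/

import Mathlib

/-- Point at parameter `t ∈ [0,1]` along the segment with endpoints `s.1`, `s.2`. -/
noncomputable def segPt (s : (ℝ × ℝ) × (ℝ × ℝ)) (t : ℝ) : ℝ × ℝ :=
  (1 - t) • s.1 + t • s.2

/-- The set of points of a segment. -/
noncomputable def segSet (s : (ℝ × ℝ) × (ℝ × ℝ)) : Set (ℝ × ℝ) :=
  segPt s '' Set.Icc 0 1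

/-- The parameters of the drawn part of a segment in a PED: a stub of fraction `a` at the
first endpoint and a stub of fraction `b` at the second endpoint. -/
def stubParams (a b : ℝ) : Set ℝ := Set.Icc 0 a ∪ Set.Icc (1 - b) 1

/-- Two segments cross if they share a point interior to both. -/
noncomputable def segCross (s s' : (ℝ × ℝ) × (ℝ × ℝ)) : Prop :=
  ∃ t u : ℝ, t ∈ Set.Ioo (0 : ℝ) 1 ∧ u ∈ Set.Ioo (0 : ℝ) 1 ∧ segPt s t = segPt s' u

/-- A PED `(A, B)` (stub fractions at each endpoint of each segment) is valid if all stubs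
are positive, total fractions are at most 1, and drawn parts of distinct segments only
meet at segment endpoints. -/
def validPED {E : Type*} (seg : E → (ℝ × ℝ) × (ℝ × ℝ)) (A B : E → ℝ) : Prop :=
  (∀ e, 0 < A e ∧ 0 < B e ∧ A e + B e ≤ 1) ∧
  ∀ e f, e ≠ f →
    ∀ t ∈ stubParams (A e) (B e), ∀ u ∈ stubParams (A f) (B f),
      segPt (seg e) t = segPt (seg f) u → (t = 0 ∨ t = 1) ∧ (u = 0 ∨ u = 1)

/-- Any 2-plane straight-line drawing admits, for every ε > 0, a partial edge
drawing in which every segment s is drawn with total stub length at least |s| − ε; hence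
the supremum of ink over all PEDs of a 2-plane drawing equals the total length of all
segments.  Hypotheses: segments are nondegenerate, two distinct segments share at most one
point, and any such common point is either interior to both (a crossing) or an endpoint of
both; each segment crosses at most 2 others (2-plane). -/
lemma segPt_injective (s : (ℝ × ℝ) × (ℝ × ℝ)) (h : s.1 ≠ s.2) :
    Function.Injective (segPt s) := by
  intro t u htu
  have h0 : segPt s t - segPt s u = (t - u) • (s.2 - s.1) := by
    unfold segPt; module
  rw [htu, sub_self] at h0
  rcases smul_eq_zero.mp h0.symm with h1 | h1
  · linarith [sub_eq_zero.mp h1]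
  · exact absurd (sub_eq_zero.mp h1).symm h

lemma segCross_symm {s s' : (ℝ × ℝ) × (ℝ × ℝ)} (h : segCross s s') : segCross s' s := by
  obtain ⟨t, u, ht, hu, heq⟩ := h
  exact ⟨u, t, hu, ht, heq.symm⟩

lemma key_lemma {E : Type*} [Fintype E] (seg : E → (ℝ × ℝ) × (ℝ × ℝ))
    (hnd : ∀ e, (seg e).1 ≠ (seg e).2)
    (hshare : ∀ e f, e ≠ f → Set.Subsingleton (segSet (seg e) ∩ segSet (seg f)))
    (hproper : ∀ e f, e ≠ f → ∀ t ∈ Set.Icc (0:ℝ) 1, ∀ u ∈ Set.Icc (0:ℝ) 1,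
      segPt (seg e) t = segPt (seg f) u →
        (t ∈ Set.Ioo (0:ℝ) 1 ∧ u ∈ Set.Ioo (0:ℝ) 1) ∨ ((t = 0 ∨ t = 1) ∧ (u = 0 ∨ u = 1)))
    (h2plane : ∀ e, {f | f ≠ e ∧ segCross (seg e) (seg f)}.ncard ≤ 2) :
    ∀ ε > (0:ℝ), ∃ A B : E → ℝ, validPED seg A B ∧
      ∀ e, dist (seg e).1 (seg e).2 - ε ≤ (A e + B e) * dist (seg e).1 (seg e).2 := by
  classical
  letI : LinearOrder E := LinearOrder.lift' (Fintype.equivFin E) (Fintype.equivFin E).injective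
  set ι := {p : E × E // p.1 < p.2 ∧ segCross (seg p.1) (seg p.2)} with hι
  set tP : ι → Finset E := fun p => {p.1.1, p.1.2} with htP
  -- each vertex is in at most 2 crossing pairs
  have hdeg : ∀ (e : E) (s : Finset ι), (s.filter (fun p => e ∈ tP p)).card ≤ 2 := by
    intro e s
    have hfin : {f | f ≠ e ∧ segCross (seg e) (seg f)}.Finite := Set.toFinite _
    have hcard : hfin.toFinset.card ≤ 2 := by
      rw [← Set.ncard_eq_toFinset_card _ hfin]; exact h2plane e
    refine le_trans (Finset.card_le_card_of_injOn
      (fun p => if p.1.1 = e then p.1.2 else p.1.1) ?_ ?_) hcard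
    · intro p hp
      simp only [Finset.mem_coe, Finset.mem_filter, htP, Finset.mem_insert, Finset.mem_singleton] at hp
      obtain ⟨-, hpe⟩ := hp
      rw [Finset.mem_coe, Set.Finite.mem_toFinset]
      by_cases h1 : p.1.1 = e
      · simp only [if_pos h1]
        refine ⟨fun hc => absurd (hc ▸ h1 ▸ p.2.1) (lt_irrefl _), ?_⟩
        exact h1 ▸ p.2.2
      · have h2 : p.1.2 = e := by tauto
        simp only [if_neg h1]
        refine ⟨fun hc => h1 (hc ▸ rfl), ?_⟩
        exact h2 ▸ segCross_symm p.2.2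
    · intro p hp q hq hpq
      simp only [Finset.coe_filter, Set.mem_setOf_eq, htP, Finset.mem_insert,
        Finset.mem_singleton] at hp hq
      simp only at hpq
      apply Subtype.ext
      have hplt := p.2.1; have hqlt := q.2.1
      by_cases h1 : (p : E × E).1 = e <;> by_cases h2 : (q : E × E).1 = e
      · rw [if_pos h1, if_pos h2] at hpq
        exact Prod.ext (h1.trans h2.symm) hpq
      · rw [if_pos h1, if_neg h2] at hpq
        have h3 : (q : E × E).2 = e := by
          rcases hq.2 with h | h
          · exact absurd h.symm h2
          · exact h.symm
        exfalso
        have hA : e < (q : E × E).1 := by rw [← h1, ← hpq]; exact hplt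
        have hB : (q : E × E).1 < e := by
          have h5 := hqlt; rw [h3] at h5; exact h5
        exact lt_asymm hA hB
      · rw [if_neg h1, if_pos h2] at hpq
        have h3 : (p : E × E).2 = e := by
          rcases hp.2 with h | h
          · exact absurd h.symm h1
          · exact h.symm
        exfalso
        have hA : e < (p : E × E).1 := by
          have h5 := hqlt; rw [h2, ← hpq] at h5; exact h5
        have hB : (p : E × E).1 < e := by
          have h5 := hplt; rw [h3] at h5; exact h5
        exact lt_asymm hA hB
      · rw [if_neg h1, if_neg h2] at hpq
        have h3 : (p : E × E).2 = e := by
          rcases hp.2 with h | h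
          · exact absurd h.symm h1
          · exact h.symm
        have h4 : (q : E × E).2 = e := by
          rcases hq.2 with h | h
          · exact absurd h.symm h2
          · exact h.symm
        exact Prod.ext hpq (h3.trans h4.symm)
  -- Hall condition
  have hall : ∀ s : Finset ι, s.card ≤ (s.biUnion tP).card := by
    intro s
    have h1 : ∀ p ∈ s, (tP p).card = 2 := fun p _ => Finset.card_pair (ne_of_lt p.2.1)
    have h2 : 2 * s.card = ∑ p ∈ s, (tP p).card := by
      rw [Finset.sum_congr rfl h1, Finset.sum_const, smul_eq_mul, mul_comm]
    have h3 : ∑ p ∈ s, (tP p).card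
        = ∑ e ∈ s.biUnion tP, (s.filter (fun p => e ∈ tP p)).card := by
      have h4 : ∀ p ∈ s, (tP p).card = ∑ e ∈ s.biUnion tP, if e ∈ tP p then 1 else 0 := by
        intro p hp
        rw [← Finset.sum_filter, Finset.filter_mem_eq_inter,
          Finset.inter_eq_right.mpr (Finset.subset_biUnion_of_mem tP hp)]
        simp
      rw [Finset.sum_congr rfl h4, Finset.sum_comm]
      refine Finset.sum_congr rfl fun e _ => ?_
      rw [Finset.card_filter]
    have h5 : ∑ e ∈ s.biUnion tP, (s.filter (fun p => e ∈ tP p)).card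
        ≤ 2 * (s.biUnion tP).card := by
      calc ∑ e ∈ s.biUnion tP, (s.filter (fun p => e ∈ tP p)).card
          ≤ ∑ _e ∈ s.biUnion tP, 2 := Finset.sum_le_sum fun e _ => hdeg e s
        _ = (s.biUnion tP).card * 2 := by rw [Finset.sum_const, smul_eq_mul]
        _ = 2 * (s.biUnion tP).card := by ring
    omega
  obtain ⟨g, hginj, hgmem⟩ := (Finset.all_card_le_biUnion_card_iff_exists_injective tP).mp hall
  -- crossing parameters for each pair
  have hT : ∀ p : ι, ∃ tu : ℝ × ℝ, tu.1 ∈ Set.Ioo (0:ℝ) 1 ∧ tu.2 ∈ Set.Ioo (0:ℝ) 1 ∧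
      segPt (seg p.1.1) tu.1 = segPt (seg p.1.2) tu.2 := by
    intro p; obtain ⟨t, u, ht, hu, h⟩ := p.2.2; exact ⟨(t, u), ht, hu, h⟩
  choose T hT1 hT2 hT3 using hT
  set τ : E → ℝ := fun e =>
    if h : ∃ p : ι, g p = e then
      (if h.choose.1.1 = e then (T h.choose).1 else (T h.choose).2)
    else 1/2 with hτ
  have hτIoo : ∀ e, τ e ∈ Set.Ioo (0:ℝ) 1 := by
    intro e
    simp only [hτ]
    by_cases h : ∃ p : ι, g p = e
    · rw [dif_pos h]
      split
      · exact hT1 _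
      · exact hT2 _
    · rw [dif_neg h]; norm_num
  have main : ∀ q : ι, segPt (seg q.1.1) (τ q.1.1) ∈ segSet (seg q.1.2) ∨
      segPt (seg q.1.2) (τ q.1.2) ∈ segSet (seg q.1.1) := by
    intro q
    have hmem := hgmem q
    simp only [htP, Finset.mem_insert, Finset.mem_singleton] at hmem
    rcases hmem with h1 | h2
    · left
      have hex : ∃ p : ι, g p = q.1.1 := ⟨q, h1⟩
      have hq : hex.choose = q := hginj (hex.choose_spec.trans h1.symm)
      have hval : τ q.1.1 = (T q).1 := by
        simp only [hτ]
        rw [dif_pos hex, hq, if_pos rfl]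
      rw [hval, hT3 q]
      exact ⟨(T q).2, ⟨(hT2 q).1.le, (hT2 q).2.le⟩, rfl⟩
    · right
      have hex : ∃ p : ι, g p = q.1.2 := ⟨q, h2⟩
      have hq : hex.choose = q := hginj (hex.choose_spec.trans h2.symm)
      have hval : τ q.1.2 = (T q).2 := by
        simp only [hτ]
        rw [dif_pos hex, hq, if_neg (ne_of_lt q.2.1)]
      rw [hval]
      exact ⟨(T q).1, ⟨(hT1 q).1.le, (hT1 q).2.le⟩, hT3 q⟩
  have hkey : ∀ e f, e ≠ f → segCross (seg e) (seg f) →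
      segPt (seg e) (τ e) ∈ segSet (seg f) ∨ segPt (seg f) (τ f) ∈ segSet (seg e) := by
    intro e f hne hcross
    rcases lt_or_gt_of_ne hne with hlt | hlt
    · exact main ⟨(e, f), hlt, hcross⟩
    · exact (main ⟨(f, e), hlt, segCross_symm hcross⟩).symm
  -- the PED
  intro ε hε
  set d : E → ℝ := fun e => dist (seg e).1 (seg e).2 with hd
  have hd0 : ∀ e, 0 ≤ d e := fun e => dist_nonneg
  set δ : E → ℝ := fun e => min (min (τ e / 2) ((1 - τ e) / 2)) (ε / (2 * (d e + 1))) with hδ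
  have hδ0 : ∀ e, 0 < δ e := by
    intro e
    have h1 := hτIoo e
    refine lt_min (lt_min (by simp at h1; linarith [h1.1]) (by simp at h1; linarith [h1.2])) ?_
    have := hd0 e
    positivity
  have hδτ : ∀ e, δ e < τ e := by
    intro e
    have h1 := (hτIoo e).1
    calc δ e ≤ τ e / 2 := le_trans (min_le_left _ _) (min_le_left _ _)
      _ < τ e := by linarith
  have hδτ' : ∀ e, δ e < 1 - τ e := by
    intro e
    have h1 := (hτIoo e).2
    calc δ e ≤ (1 - τ e) / 2 := le_trans (min_le_left _ _) (min_le_right _ _)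
      _ < 1 - τ e := by linarith
  refine ⟨fun e => τ e - δ e, fun e => 1 - τ e - δ e, ⟨?_, ?_⟩, ?_⟩
  · intro e
    have h1 := hδτ e; have h2 := hδτ' e; have h3 := hδ0 e
    refine ⟨by dsimp only; linarith, by dsimp only; linarith, by dsimp only; linarith⟩
  · intro e f hne t ht u hu heq
    dsimp only at ht hu
    have hτe := hτIoo e; have hτf := hτIoo f
    have hδe := hδ0 e; have hδf := hδ0 f
    have htI : t ∈ Set.Icc (0:ℝ) 1 := by
      rcases ht with ⟨h1, h2⟩ | ⟨h1, h2⟩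
      · exact ⟨h1, by linarith [hτe.2]⟩
      · exact ⟨by linarith [hτe.1], h2⟩
    have huI : u ∈ Set.Icc (0:ℝ) 1 := by
      rcases hu with ⟨h1, h2⟩ | ⟨h1, h2⟩
      · exact ⟨h1, by linarith [hτf.2]⟩
      · exact ⟨by linarith [hτf.1], h2⟩
    rcases hproper e f hne t htI u huI heq with ⟨htIoo, huIoo⟩ | hend
    · exfalso
      have hcr : segCross (seg e) (seg f) := ⟨t, u, htIoo, huIoo, heq⟩
      have hmem1 : segPt (seg e) t ∈ segSet (seg e) ∩ segSet (seg f) :=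
        ⟨⟨t, htI, rfl⟩, ⟨u, huI, heq.symm⟩⟩
      rcases hkey e f hne hcr with hL | hR
      · obtain ⟨u', hu'I, hequ⟩ := hL
        have hmem2 : segPt (seg e) (τ e) ∈ segSet (seg e) ∩ segSet (seg f) :=
          ⟨⟨τ e, ⟨hτe.1.le, hτe.2.le⟩, rfl⟩, ⟨u', hu'I, hequ⟩⟩
        have heqt : t = τ e :=
          segPt_injective (seg e) (hnd e) (hshare e f hne hmem1 hmem2)
        rcases ht with ⟨h1, h2⟩ | ⟨h1, h2⟩ <;> [linarith; linarith]
      · obtain ⟨t', ht'I, heqt'⟩ := hR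
        have hmem2 : segPt (seg f) (τ f) ∈ segSet (seg e) ∩ segSet (seg f) :=
          ⟨⟨t', ht'I, heqt'⟩, ⟨τ f, ⟨hτf.1.le, hτf.2.le⟩, rfl⟩⟩
        have hmem1' : segPt (seg f) u ∈ segSet (seg e) ∩ segSet (seg f) := by
          rw [← heq]; exact hmem1
        have hequ : u = τ f :=
          segPt_injective (seg f) (hnd f) (hshare e f hne hmem1' hmem2)
        rcases hu with ⟨h1, h2⟩ | ⟨h1, h2⟩ <;> [linarith; linarith]
    · exact hend
  · intro e
    have h1 : δ e ≤ ε / (2 * (d e + 1)) := min_le_right _ _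
    have h2 : 0 < 2 * (d e + 1) := by have := hd0 e; linarith
    have h4 : δ e * (2 * (d e + 1)) ≤ ε := (le_div_iff₀ h2).mp h1
    have h5 := hd0 e
    have h6 := hδ0 e
    show d e - ε ≤ (τ e - δ e + (1 - τ e - δ e)) * d e
    nlinarith

theorem stmt_4 {E : Type*} [Fintype E] (seg : E → (ℝ × ℝ) × (ℝ × ℝ))
    (hnd : ∀ e, (seg e).1 ≠ (seg e).2)
    (hshare : ∀ e f, e ≠ f → Set.Subsingleton (segSet (seg e) ∩ segSet (seg f)))
    (hproper : ∀ e f, e ≠ f → ∀ t ∈ Set.Icc (0:ℝ) 1, ∀ u ∈ Set.Icc (0:ℝ) 1,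
      segPt (seg e) t = segPt (seg f) u →
        (t ∈ Set.Ioo (0:ℝ) 1 ∧ u ∈ Set.Ioo (0:ℝ) 1) ∨ ((t = 0 ∨ t = 1) ∧ (u = 0 ∨ u = 1)))
    (h2plane : ∀ e, {f | f ≠ e ∧ segCross (seg e) (seg f)}.ncard ≤ 2) :
    (∀ ε > (0:ℝ), ∃ A B : E → ℝ, validPED seg A B ∧
      ∀ e, dist (seg e).1 (seg e).2 - ε ≤ (A e + B e) * dist (seg e).1 (seg e).2) ∧
    IsLUB {I | ∃ A B : E → ℝ, validPED seg A B ∧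
        I = ∑ e, (A e + B e) * dist (seg e).1 (seg e).2}
      (∑ e, dist (seg e).1 (seg e).2) := by
  have hkey := key_lemma seg hnd hshare hproper h2plane
  refine ⟨hkey, ?_, ?_⟩
  · rintro I ⟨A, B, hv, rfl⟩
    apply Finset.sum_le_sum
    intro e _
    have h1 := hv.1 e
    calc (A e + B e) * dist (seg e).1 (seg e).2
        ≤ 1 * dist (seg e).1 (seg e).2 :=
          mul_le_mul_of_nonneg_right h1.2.2 dist_nonneg
      _ = dist (seg e).1 (seg e).2 := one_mul _
  · intro w hw
    refine le_of_forall_pos_le_add ?_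
    intro ε hε
    set n := Fintype.card E with hn
    obtain ⟨A, B, hv, hink⟩ := hkey (ε / (n + 1)) (by positivity)
    have hle : (∑ e, (A e + B e) * dist (seg e).1 (seg e).2) ≤ w := hw ⟨A, B, hv, rfl⟩
    have h2 : ∑ e, dist (seg e).1 (seg e).2 - (n : ℝ) * (ε / (n + 1))
        ≤ ∑ e, (A e + B e) * dist (seg e).1 (seg e).2 := by
      have h3 := Finset.sum_le_sum (fun e (_ : e ∈ Finset.univ) => hink e)
      rw [Finset.sum_sub_distrib, Finset.sum_const, Finset.card_univ, nsmul_eq_mul] at h3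
      exact h3
    have hnn : (0:ℝ) ≤ n := Nat.cast_nonneg n
    have h4 : (n : ℝ) * (ε / (n + 1)) ≤ ε := by
      rw [mul_div_assoc', div_le_iff₀ (by positivity)]
      nlinarith
    linarith
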